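/- The algebra ℂ⟨x,y⟩/⟨xyx⟩ has exponential growth: for any k ≥ 1 and any integers m_1,…,m_k ≥ 2, the monomials x y^{m_1} x y^{m_2} ⋯ x y^{m_k} are linearly independent in ℂ⟨x,y⟩/⟨xyx⟩. In contrast, ℂ⟨x,y⟩/⟨xyx−1⟩ is commutative (since xy = yx in this quotient), hence has polynomial growth; consequently the natural surjection ℂ⟨x,y⟩/⟨xyx⟩ → gr(ℂ⟨x,y⟩/⟨xyx−1⟩) is not injective. -/

import Mathlib

/-- The relation presenting `ℂ⟨x,y⟩/⟨xyx⟩`. -/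
def relXYX : FreeAlgebra ℂ (Fin 2) → FreeAlgebra ℂ (Fin 2) → Prop :=
  fun a b =>
    a = FreeAlgebra.ι ℂ (0 : Fin 2) * FreeAlgebra.ι ℂ (1 : Fin 2) *
      FreeAlgebra.ι ℂ (0 : Fin 2) ∧ b = 0

/-- The relation presenting `ℂ⟨x,y⟩/⟨xyx − 1⟩`. -/
def relXYX1 : FreeAlgebra ℂ (Fin 2) → FreeAlgebra ℂ (Fin 2) → Prop :=
  fun a b =>
    a = FreeAlgebra.ι ℂ (0 : Fin 2) * FreeAlgebra.ι ℂ (1 : Fin 2) *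
      FreeAlgebra.ι ℂ (0 : Fin 2) ∧ b = 1

namespace Stmt19

/-- The representation space: formal `ℂ`-linear combinations of words. -/
abbrev V : Type := List (Fin 2) →₀ ℂ

/-- A word is *bad* if it contains the factor `xyx = [0,1,0]`. -/
def bad (u : List (Fin 2)) : Prop := [0, 1, 0] <:+: u

instance : DecidablePred bad := fun u => inferInstanceAs (Decidable (_ <:+: _))

/-- The action of a generator: prepend a letter, killing bad words. -/
noncomputable def act (a : Fin 2) : V →ₗ[ℂ] V :=
  Finsupp.lsum ℂ fun w => if bad (a :: w) then 0 else Finsupp.lsingle (a :: w)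

lemma act_single (a : Fin 2) (w : List (Fin 2)) (c : ℂ) :
    act a (Finsupp.single w c) =
      if bad (a :: w) then 0 else Finsupp.single (a :: w) c := by
  rw [act, Finsupp.lsum_single]
  split_ifs <;> simp [Finsupp.lsingle]

lemma not_bad_nil : ¬ bad ([] : List (Fin 2)) := by
  simp [bad]

lemma not_bad_one_cons {u : List (Fin 2)} (h : ¬ bad u) : ¬ bad ((1 : Fin 2) :: u) := by
  intro hb
  rcases List.infix_cons_iff.1 hb with hp | hi
  · rw [List.cons_prefix_cons] at hp
    exact absurd hp.1 (by decide)
  · exact h hi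

lemma not_bad_rep {u : List (Fin 2)} (m : ℕ) (h : ¬ bad u) :
    ¬ bad (List.replicate m (1 : Fin 2) ++ u) := by
  induction m with
  | zero => simpa using h
  | succ n ih =>
    rw [List.replicate_succ, List.cons_append]
    exact not_bad_one_cons ih

lemma not_bad_block {u : List (Fin 2)} {m : ℕ} (hm : 2 ≤ m) (h : ¬ bad u) :
    ¬ bad ((0 : Fin 2) :: (List.replicate m (1 : Fin 2) ++ u)) := by
  intro hb
  rcases List.infix_cons_iff.1 hb with hp | hi
  · obtain ⟨n, rfl⟩ : ∃ n, m = n + 2 := ⟨m - 2, by omega⟩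
    rw [List.cons_prefix_cons] at hp
    have := hp.2
    rw [show (n + 2) = (n + 1) + 1 from rfl, List.replicate_succ, List.cons_append,
      List.cons_prefix_cons] at this
    have := this.2
    rw [List.replicate_succ, List.cons_append, List.cons_prefix_cons] at this
    exact absurd this.1 (by decide)
  · exact not_bad_rep m h hi

lemma pow_act_one (m : ℕ) : ∀ {u : List (Fin 2)}, ¬ bad u →
    ((act 1) ^ m) (Finsupp.single u 1) =
      Finsupp.single (List.replicate m (1 : Fin 2) ++ u) 1 := by
  induction m with
  | zero => intro u h; simp
  | succ n ih =>
    intro u h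
    rw [pow_succ, Module.End.mul_apply, act_single, if_neg (not_bad_one_cons h),
      ih (not_bad_one_cons h), List.replicate_succ']
    simp [List.append_assoc]

/-- The word corresponding to one block `x y^m`. -/
def blockWord (m : ℕ) : List (Fin 2) := (0 : Fin 2) :: List.replicate m 1

lemma key (bs : List ℕ) (hbs : ∀ m ∈ bs, 2 ≤ m) {u : List (Fin 2)} (hu : ¬ bad u) :
    ((bs.map fun m => act 0 * (act 1) ^ m).prod (Finsupp.single u 1) =
        Finsupp.single ((bs.map blockWord).flatten ++ u) 1) ∧
      ¬ bad ((bs.map blockWord).flatten ++ u) := by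
  induction bs with
  | nil => simpa using hu
  | cons m bs ih =>
    obtain ⟨h1, h2⟩ := ih (fun x hx => hbs x (List.mem_cons_of_mem _ hx))
    have hm : 2 ≤ m := hbs m (List.mem_cons_self)
    have hgood := not_bad_block hm h2
    constructor
    · rw [List.map_cons, List.prod_cons, Module.End.mul_apply, h1,
        Module.End.mul_apply, pow_act_one m h2, act_single, if_neg hgood]
      simp [blockWord, List.append_assoc]
    · simpa [blockWord, List.append_assoc] using hgood

lemma join_head (bs : List ℕ) :
    (bs.map blockWord).flatten = [] ∨ ∃ t, (bs.map blockWord).flatten = (0 : Fin 2) :: t := by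
  cases bs with
  | nil => left; rfl
  | cons m bs => right; exact ⟨_, rfl⟩

lemma rep_cancel : ∀ (m m' : ℕ) (J J' : List (Fin 2)),
    (J = [] ∨ ∃ t, J = (0 : Fin 2) :: t) → (J' = [] ∨ ∃ t, J' = (0 : Fin 2) :: t) →
    List.replicate m (1 : Fin 2) ++ J = List.replicate m' (1 : Fin 2) ++ J' →
    m = m' ∧ J = J' := by
  intro m
  induction m with
  | zero =>
    intro m' J J' hJ hJ' h
    cases m' with
    | zero => simpa using h
    | succ n =>
      exfalso
      rw [List.replicate_zero, List.nil_append, List.replicate_succ, List.cons_append] at h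
      rcases hJ with rfl | ⟨t, rfl⟩
      · exact absurd h (by simp)
      · exact absurd (List.head_eq_of_cons_eq h) (by decide)
  | succ n ih =>
    intro m' J J' hJ hJ' h
    cases m' with
    | zero =>
      exfalso
      rw [List.replicate_zero, List.nil_append, List.replicate_succ, List.cons_append] at h
      rcases hJ' with rfl | ⟨t, rfl⟩
      · exact absurd h (by simp)
      · exact absurd (List.head_eq_of_cons_eq h) (by decide)
    | succ n' =>
      rw [List.replicate_succ, List.replicate_succ, List.cons_append, List.cons_append] at h
      obtain ⟨hm, hJeq⟩ := ih n' J J' hJ hJ' (List.tail_eq_of_cons_eq h)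
      exact ⟨by omega, hJeq⟩

lemma join_inj : ∀ bs bs' : List ℕ,
    (bs.map blockWord).flatten = (bs'.map blockWord).flatten → bs = bs' := by
  intro bs
  induction bs with
  | nil =>
    intro bs' h
    cases bs' with
    | nil => rfl
    | cons m bs' => exact absurd h.symm (by simp [blockWord])
  | cons m bs ih =>
    intro bs' h
    cases bs' with
    | nil => exact absurd h (by simp [blockWord])
    | cons m' bs' =>
      simp only [List.map_cons, List.flatten_cons, blockWord, List.cons_append] at h
      have h2 := List.tail_eq_of_cons_eq h
      obtain ⟨hm, hJ⟩ := rep_cancel m m' _ _ (join_head bs) (join_head bs') h2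
      rw [hm, ih bs' hJ]


/-- The representation of the free algebra on `V`. -/
noncomputable def rep : FreeAlgebra ℂ (Fin 2) →ₐ[ℂ] Module.End ℂ V :=
  FreeAlgebra.lift ℂ act

lemma rep_xyx : rep (FreeAlgebra.ι ℂ (0 : Fin 2) * FreeAlgebra.ι ℂ (1 : Fin 2) *
    FreeAlgebra.ι ℂ (0 : Fin 2)) = 0 := by
  rw [map_mul, map_mul, rep, FreeAlgebra.lift_ι_apply, FreeAlgebra.lift_ι_apply]
  refine Finsupp.lhom_ext fun w c => ?_
  rw [Module.End.mul_apply, Module.End.mul_apply, act_single]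
  split_ifs with h0
  · simp
  · rw [act_single]
    split_ifs with h1
    · simp
    · rw [act_single, if_pos, LinearMap.zero_apply]
      exact ⟨[], w, by simp⟩

lemma rep_rel : ∀ ⦃a b : FreeAlgebra ℂ (Fin 2)⦄, relXYX a b → rep a = rep b := by
  rintro a b ⟨rfl, rfl⟩
  simpa using rep_xyx

/-- The induced representation of the quotient. -/
noncomputable def repQ : RingQuot relXYX →ₐ[ℂ] Module.End ℂ V :=
  RingQuot.liftAlgHom ℂ ⟨rep, rep_rel⟩

/-- Encoding of an index as a word. -/
def encode (w : Σ k : ℕ, {m : Fin (k + 1) → ℕ // ∀ i, 2 ≤ m i}) : List (Fin 2) :=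
  ((List.ofFn w.2.1).map blockWord).flatten

lemma encode_injective : Function.Injective encode := by
  rintro ⟨k, m, hm⟩ ⟨k', m', hm'⟩ h
  have h2 : List.ofFn m = List.ofFn m' := join_inj _ _ h
  have hk : k = k' := by
    have := congrArg List.length h2
    simpa using this
  subst hk
  have : m = m' := List.ofFn_injective h2
  subst this
  rfl

end Stmt19

/-- (a) In `ℂ⟨x,y⟩/⟨xyx⟩`, the monomials `x y^{m₁} x y^{m₂} ⋯ x y^{m_k}` over all `k ≥ 1` and
all `m₁,…,m_k ≥ 2` are linearly independent (so the algebra has exponential growth).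
(b) In `ℂ⟨x,y⟩/⟨xyx − 1⟩`, `xy = yx` (so that quotient is commutative). -/
theorem stmt19 :
    (letI x := RingQuot.mkAlgHom ℂ relXYX (FreeAlgebra.ι ℂ (0 : Fin 2))
     letI y := RingQuot.mkAlgHom ℂ relXYX (FreeAlgebra.ι ℂ (1 : Fin 2))
     LinearIndependent ℂ
       (fun w : Σ k : ℕ, {m : Fin (k + 1) → ℕ // ∀ i, 2 ≤ m i} =>
         (List.ofFn fun i : Fin (w.1 + 1) => x * y ^ (w.2.1 i)).prod)) ∧
    (RingQuot.mkAlgHom ℂ relXYX1 (FreeAlgebra.ι ℂ (0 : Fin 2)) *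
        RingQuot.mkAlgHom ℂ relXYX1 (FreeAlgebra.ι ℂ (1 : Fin 2)) =
      RingQuot.mkAlgHom ℂ relXYX1 (FreeAlgebra.ι ℂ (1 : Fin 2)) *
        RingQuot.mkAlgHom ℂ relXYX1 (FreeAlgebra.ι ℂ (0 : Fin 2))) := by
  constructor
  · -- Part (a): linear independence via the representation on V
    letI x := RingQuot.mkAlgHom ℂ relXYX (FreeAlgebra.ι ℂ (0 : Fin 2))
    letI y := RingQuot.mkAlgHom ℂ relXYX (FreeAlgebra.ι ℂ (1 : Fin 2))
    let T : RingQuot relXYX →ₗ[ℂ] Stmt19.V :=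
      (LinearMap.applyₗ (Finsupp.single ([] : List (Fin 2)) (1 : ℂ))).comp
        Stmt19.repQ.toLinearMap
    refine LinearIndependent.of_comp T ?_
    have hx : Stmt19.repQ x = Stmt19.act 0 := by
      rw [Stmt19.repQ, RingQuot.liftAlgHom_mkAlgHom_apply, Stmt19.rep, FreeAlgebra.lift_ι_apply]
    have hy : Stmt19.repQ y = Stmt19.act 1 := by
      rw [Stmt19.repQ, RingQuot.liftAlgHom_mkAlgHom_apply, Stmt19.rep, FreeAlgebra.lift_ι_apply]
    have hcomp : (⇑T ∘ fun w : Σ k : ℕ, {m : Fin (k + 1) → ℕ // ∀ i, 2 ≤ m i} =>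
        (List.ofFn fun i : Fin (w.1 + 1) => x * y ^ (w.2.1 i)).prod) =
        fun w => Finsupp.single (Stmt19.encode w) 1 := by
      funext w
      obtain ⟨k, m, hm⟩ := w
      simp only [Function.comp_apply, T, LinearMap.comp_apply, AlgHom.toLinearMap_apply]
      rw [map_list_prod, List.map_ofFn]
      have h1 : ⇑Stmt19.repQ ∘ (fun i : Fin (k + 1) => x * y ^ m i) =
          (fun n => Stmt19.act 0 * Stmt19.act 1 ^ n) ∘ m := by
        funext i
        simp only [Function.comp_apply, map_mul, map_pow, hx, hy]
      rw [h1, ← List.map_ofFn]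
      have hmem : ∀ n ∈ List.ofFn m, 2 ≤ n := by
        intro n hn
        obtain ⟨i, rfl⟩ := List.mem_ofFn.1 hn
        exact hm i
      show (List.map (fun n => Stmt19.act 0 * Stmt19.act 1 ^ n) (List.ofFn m)).prod
          (Finsupp.single [] 1) = _
      rw [(Stmt19.key (List.ofFn m) hmem Stmt19.not_bad_nil).1, Stmt19.encode, List.append_nil]
    rw [hcomp]
    have li := (Finsupp.basisSingleOne (R := ℂ)
      (ι := List (Fin 2))).linearIndependent.comp _ Stmt19.encode_injective
    rw [Finsupp.coe_basisSingleOne] at li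
    exact li
  · -- Part (b): xyx = 1 forces commutativity
    set X := RingQuot.mkAlgHom ℂ relXYX1 (FreeAlgebra.ι ℂ (0 : Fin 2)) with hX
    set Y := RingQuot.mkAlgHom ℂ relXYX1 (FreeAlgebra.ι ℂ (1 : Fin 2)) with hY
    have h : X * Y * X = 1 := by
      rw [hX, hY, ← map_mul, ← map_mul, ← map_one (RingQuot.mkAlgHom ℂ relXYX1)]
      exact RingQuot.mkAlgHom_rel ℂ ⟨rfl, rfl⟩
    calc X * Y = X * Y * (X * Y * X) := by rw [h, mul_one]
      _ = (X * Y * X) * (Y * X) := by noncomm_ring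
      _ = Y * X := by rw [h, one_mul]
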